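/- If i is a nonnegative even integer and n ≥ 5 is an odd integer, then the integral over [iπ, (i+1)π] of [ (2 sin²(s)/sⁿ - cos(s)sin(s)/s^(n-1) - 1/s^(n-2)) - (2 sin²(s+π)/(s+π)ⁿ - cos(s+π)sin(s+π)/(s+π)^(n-1) - 1/(s+π)^(n-2)) ] · sin^(n-2)(s) ds is negative, provided n ≥ 6 or (n = 5 and i ≥ 2). -/

import Mathlib

open Real MeasureTheory

lemma aux_nonneg_of_deriv {f f' : ℝ → ℝ} (hd : ∀ x, HasDerivAt f (f' x) x)
    (h0 : f 0 = 0) (hpos : ∀ x, 0 ≤ x → 0 ≤ f' x) {x : ℝ} (hx : 0 ≤ x) : 0 ≤ f x := by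
  have hmono : MonotoneOn f (Set.Ici 0) := by
    apply monotoneOn_of_deriv_nonneg (convex_Ici 0)
    · exact fun y _ => (hd y).continuousAt.continuousWithinAt
    · exact fun y _ => ((hd y).differentiableAt).differentiableWithinAt
    · intro y hy
      rw [(hd y).deriv]
      exact hpos y (le_of_lt (by simpa using hy))
  calc (0:ℝ) = f 0 := h0.symm
  _ ≤ f x := hmono (Set.self_mem_Ici) hx hx


lemma aux_sin_lb3 {x : ℝ} (hx : 0 ≤ x) : x - x^3/6 ≤ sin x := by
  have := aux_nonneg_of_deriv (f := fun y => sin y - (y - y^3/6))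
    (f' := fun y => cos y - (1 - y^2/2)) (fun y => by
      exact (Real.hasDerivAt_sin y).sub
        (((hasDerivAt_id y).sub (((hasDerivAt_pow 3 y).div_const 6))).congr_deriv (by ring)))
    (by simp) (fun y hy => by nlinarith [one_sub_sq_div_two_le_cos (x := y)]) hx
  linarith [this]

lemma aux_cos_ub4 {x : ℝ} (hx : 0 ≤ x) : cos x ≤ 1 - x^2/2 + x^4/24 := by
  have := aux_nonneg_of_deriv (f := fun y => 1 - y^2/2 + y^4/24 - cos y)
    (f' := fun y => -y + y^3/6 + sin y) (fun y => by
      have h1 : HasDerivAt (fun y : ℝ => 1 - y^2/2 + y^4/24 - cos y)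
          (0 - (2*y^1)/2 + (4*y^3)/24 - (-sin y)) y := by
        exact ((((hasDerivAt_const y (1:ℝ)).sub ((hasDerivAt_pow 2 y).div_const 2)).add
          ((hasDerivAt_pow 4 y).div_const 24)).sub (Real.hasDerivAt_cos y))
      convert h1 using 1; push_cast; ring)
    (by simp) (fun y hy => by nlinarith [aux_sin_lb3 hy]) hx
  linarith [this]

lemma aux_sin_ub5 {x : ℝ} (hx : 0 ≤ x) : sin x ≤ x - x^3/6 + x^5/120 := by
  have := aux_nonneg_of_deriv (f := fun y => y - y^3/6 + y^5/120 - sin y)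
    (f' := fun y => 1 - y^2/2 + y^4/24 - cos y) (fun y => by
      have h1 : HasDerivAt (fun y : ℝ => y - y^3/6 + y^5/120 - sin y)
          (1 - (3*y^2)/6 + (5*y^4)/120 - cos y) y := by
        exact (((hasDerivAt_id y).sub ((hasDerivAt_pow 3 y).div_const 6)).add
          ((hasDerivAt_pow 5 y).div_const 120)).sub (Real.hasDerivAt_sin y)
      convert h1 using 1; push_cast; ring)
    (by simp) (fun y hy => by nlinarith [aux_cos_ub4 hy]) hx
  linarith [this]

lemma aux_cos_lb6 {x : ℝ} (hx : 0 ≤ x) : 1 - x^2/2 + x^4/24 - x^6/720 ≤ cos x := by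
  have := aux_nonneg_of_deriv (f := fun y => cos y - (1 - y^2/2 + y^4/24 - y^6/720))
    (f' := fun y => -sin y + (y - y^3/6 + y^5/120)) (fun y => by
      have h1 : HasDerivAt (fun y : ℝ => cos y - (1 - y^2/2 + y^4/24 - y^6/720))
          (-sin y - (0 - (2*y^1)/2 + (4*y^3)/24 - (6*y^5)/720)) y := by
        exact (Real.hasDerivAt_cos y).sub ((((hasDerivAt_const y (1:ℝ)).sub
          ((hasDerivAt_pow 2 y).div_const 2)).add ((hasDerivAt_pow 4 y).div_const 24)).sub
          ((hasDerivAt_pow 6 y).div_const 720))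
      convert h1 using 1; push_cast; ring)
    (by simp) (fun y hy => by nlinarith [aux_sin_ub5 hy]) hx
  linarith [this]

lemma aux_sin_lb7 {x : ℝ} (hx : 0 ≤ x) : x - x^3/6 + x^5/120 - x^7/5040 ≤ sin x := by
  have := aux_nonneg_of_deriv (f := fun y => sin y - (y - y^3/6 + y^5/120 - y^7/5040))
    (f' := fun y => cos y - (1 - y^2/2 + y^4/24 - y^6/720)) (fun y => by
      have h1 : HasDerivAt (fun y : ℝ => sin y - (y - y^3/6 + y^5/120 - y^7/5040))
          (cos y - (1 - (3*y^2)/6 + (5*y^4)/120 - (7*y^6)/5040)) y := by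
        exact (Real.hasDerivAt_sin y).sub ((((hasDerivAt_id y).sub
          ((hasDerivAt_pow 3 y).div_const 6)).add ((hasDerivAt_pow 5 y).div_const 120)).sub
          ((hasDerivAt_pow 7 y).div_const 5040))
      convert h1 using 1; push_cast; ring
    )
    (by simp) (fun y hy => by nlinarith [aux_cos_lb6 hy]) hx
  linarith [this]


lemma aux_N_le {s : ℝ} (hs : 0 < s) (hs3 : s ≤ 3) :
    2 * sin s ^ 2 - s * (cos s * sin s) - s ^ 2 ≤ -s^6/400 := by
  have h2s : 2 * sin s ^ 2 - s * (cos s * sin s) - s^2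
      = 1 - cos (2*s) - (s/2) * sin (2*s) - s^2 := by
    rw [Real.cos_two_mul, Real.sin_two_mul]; ring_nf
    rw [Real.sin_sq s]; ring
  rw [h2s]
  rcases le_total s 1.8 with hc | hc
  · have hx0 : (0:ℝ) ≤ 2*s := by linarith
    have hcos := aux_cos_lb6 hx0
    have hsin := mul_le_mul_of_nonneg_left (aux_sin_lb7 hx0) (by positivity : (0:ℝ) ≤ s/2)
    have h7 : (1.8 - s) * s^7 ≥ 0 := by nlinarith [pow_nonneg hs.le 7]
    have h6 : (1.8 - s) * s^6 ≥ 0 := by nlinarith [pow_nonneg hs.le 6]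
    nlinarith [pow_nonneg hs.le 6, pow_nonneg hs.le 8]
  · have h1 : cos (2*s) ≥ -1 := neg_one_le_cos _
    have h2 : sin (2*s) ≥ -1 := neg_one_le_sin _
    have h18 : (0:ℝ) ≤ s - 1.8 := by linarith
    have h3s : (0:ℝ) ≤ 3 - s := by linarith
    have k4 : (s-1.8)*(3-s)*s^4 ≥ 0 := by positivity
    have k3 : (s-1.8)*(3-s)*s^3 ≥ 0 := by positivity
    have k2 : (s-1.8)*(3-s)*s^2 ≥ 0 := by positivity
    have k1 : (s-1.8)*(3-s)*s ≥ 0 := by positivity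
    have k0 : (s-1.8)*(3-s) ≥ 0 := by positivity
    nlinarith [sq_nonneg s, hs.le]


lemma aux_split {x a b : ℝ} (hx : x ≠ 0) (m : ℕ) :
    a / x^(m+7) - b / x^(m+6) - 1 / x^(m+5) = (a - x*b - x^2)/x^(m+7) := by
  have e1 : (x*b)/x^(m+7) = b/x^(m+6) := by
    rw [div_eq_div_iff (pow_ne_zero _ hx) (pow_ne_zero _ hx)]; ring
  have e2 : x^2/x^(m+7) = 1/x^(m+5) := by
    rw [div_eq_div_iff (pow_ne_zero _ hx) (pow_ne_zero _ hx)]; ring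
  rw [sub_div, sub_div, e1, e2]

lemma aux_cs_le {s : ℝ} : cos s * sin s ≤ 1/2 := by
  nlinarith [sq_nonneg (cos s - sin s), sin_sq_add_cos_sq s]

lemma aux_neg_cs_le {s : ℝ} : -(cos s * sin s) ≤ 1/2 := by
  nlinarith [sq_nonneg (cos s + sin s), sin_sq_add_cos_sq s]

lemma aux_key5 {s t : ℝ} (h3 : 3 ≤ s) (hst : s < t) :
    (t^2 - t/2 - 2) * s^5 < (s^2 - s/2 - 2) * t^5 := by
  have hs : (0:ℝ) < s := by linarith
  have hu : (0:ℝ) < t - s := by linarith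
  have hps : (0:ℝ) < s^2 - s/2 - 2 := by nlinarith
  have h1 := mul_pos (mul_pos hu (pow_pos hs 4)) (by nlinarith : (0:ℝ) < 3*s^2-2*s-10)
  have h2 := mul_nonneg (mul_nonneg (sq_nonneg (t-s)) (pow_nonneg hs.le 3))
      (by nlinarith : (0:ℝ) ≤ 9*s^2-5*s-20)
  have h3' := mul_nonneg (mul_nonneg (by nlinarith : (0:ℝ) ≤ 10*(s^2-s/2-2)) (pow_nonneg hs.le 2))
      (pow_nonneg hu.le 3)
  have h4 := mul_nonneg (mul_nonneg (by nlinarith : (0:ℝ) ≤ 5*(s^2-s/2-2)) hs.le)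
      (pow_nonneg hu.le 4)
  have h5 := mul_nonneg hps.le (pow_nonneg hu.le 5)
  nlinarith [h1, h2, h3', h4, h5]

lemma aux_small_key {s t : ℝ} (m : ℕ) (hs : 0 < s) (hst : s < t) (htpi : 3 ≤ t)
    (h5t : 467 * s < t^5) :
    (-s^6/400)/s^(m+7) < (-(t^2+t/2))/t^(m+7) := by
  have ht : 0 < t := by linarith
  have hsM : (0:ℝ) < s^(m+7) := pow_pos hs _
  have htM : (0:ℝ) < t^(m+7) := pow_pos ht _
  have step1 : 400*(t^2 + t/2)*s^7 < s^6 * t^7 := by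
    have h6 : t^2 + t/2 ≤ (7/6)*t^2 := by nlinarith [mul_nonneg (by linarith : (0:ℝ) ≤ t - 3) ht.le]
    have h9 : 400*(t^2+t/2)*s < t^7 := by
      nlinarith [mul_le_mul_of_nonneg_right h6 (by positivity : (0:ℝ) ≤ 400*s),
        mul_lt_mul_of_pos_left h5t (by positivity : (0:ℝ) < t^2)]
    calc 400*(t^2 + t/2)*s^7 = (400*(t^2+t/2)*s) * s^6 := by ring
      _ < t^7 * s^6 := mul_lt_mul_of_pos_right h9 (by positivity)
      _ = s^6 * t^7 := by ring
  have step2 : 400*(t^2 + t/2)*s^(m+7) < s^6 * t^(m+7) := by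
    have h1 : 400*(t^2 + t/2)*s^(m+7) = (400*(t^2+t/2)*s^7) * s^m := by ring
    have h2 : s^6 * t^(m+7) = (s^6 * t^7) * t^m := by ring
    rw [h1, h2]
    calc (400*(t^2+t/2)*s^7) * s^m < (s^6*t^7) * s^m :=
          mul_lt_mul_of_pos_right step1 (pow_pos hs m)
      _ ≤ (s^6*t^7) * t^m :=
          mul_le_mul_of_nonneg_left (pow_le_pow_left₀ hs.le hst.le m) (by positivity)
  rw [div_lt_div_iff₀ hsM htM]
  nlinarith [step2]

lemma aux_bracket_neg (n : ℕ) (hn : 5 ≤ n) {s : ℝ} (hs : 0 < s) (hcase : 3 ≤ s ∨ 7 ≤ n) :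
    (2 * sin s ^ 2 / s ^ n - cos s * sin s / s ^ (n - 1) - 1 / s ^ (n - 2)) -
      (2 * sin s ^ 2 / (s + π) ^ n - cos s * sin s / (s + π) ^ (n - 1) -
        1 / (s + π) ^ (n - 2)) < 0 := by
  have hpi := Real.pi_gt_d6
  obtain ⟨t, ht_eq⟩ : ∃ t : ℝ, t = s + π := ⟨_, rfl⟩
  have h5t : 467 * s < t^5 := by
    rw [ht_eq]
    have hp2 : (9.8:ℝ) < π^2 := by nlinarith
    have hp4 : (96:ℝ) < π^4 := by nlinarith
    nlinarith [pow_pos hs 5, mul_pos (pow_pos hs 4) pi_pos,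
      mul_pos (pow_pos hs 3) (mul_pos pi_pos pi_pos),
      mul_pos (pow_pos hs 2) (by positivity : (0:ℝ) < π^3),
      mul_nonneg hs.le (by linarith : (0:ℝ) ≤ π^4 - 96),
      pow_pos pi_pos 5]
  rw [show s + π = t from ht_eq.symm]
  have hst : s < t := by rw [ht_eq]; linarith
  have ht : 0 < t := by linarith
  have htpi : 3 ≤ t := by rw [ht_eq]; linarith
  by_cases h3 : 3 ≤ s
  · -- large s case
    obtain ⟨k, rfl⟩ : ∃ k, n = k + 5 := ⟨n - 5, by omega⟩
    rw [show k + 5 - 1 = k + 4 from by omega, show k + 5 - 2 = k + 3 from by omega]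
    have key5 := aux_key5 h3 hst
    have hps : (0:ℝ) < s^2 - s/2 - 2 := by nlinarith
    have hk : s^k ≤ t^k := pow_le_pow_left₀ hs.le hst.le k
    have keyn : (t^2 - t/2 - 2) * s^(k+5) < (s^2 - s/2 - 2) * t^(k+5) := by
      have h1 : (t^2 - t/2 - 2) * s^(k+5) = ((t^2 - t/2 - 2) * s^5) * s^k := by ring
      have h2 : (s^2 - s/2 - 2) * t^(k+5) = ((s^2 - s/2 - 2) * t^5) * t^k := by ring
      rw [h1, h2]
      calc ((t^2 - t/2 - 2) * s^5) * s^k < ((s^2 - s/2 - 2) * t^5) * s^k :=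
            mul_lt_mul_of_pos_right key5 (pow_pos hs k)
        _ ≤ ((s^2 - s/2 - 2) * t^5) * t^k :=
            mul_le_mul_of_nonneg_left hk (by positivity)
    have hs5 : (0:ℝ) < s^(k+5) := pow_pos hs _
    have ht5 : (0:ℝ) < t^(k+5) := pow_pos ht _
    have gs_lt : 2/s^(k+5) + 1/(2*s^(k+4)) - 1/s^(k+3)
        < 2/t^(k+5) + 1/(2*t^(k+4)) - 1/t^(k+3) := by
      have es : 2/s^(k+5) + 1/(2*s^(k+4)) - 1/s^(k+3) = (2 + s/2 - s^2)/s^(k+5) := by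
        field_simp; ring
      have et : 2/t^(k+5) + 1/(2*t^(k+4)) - 1/t^(k+3) = (2 + t/2 - t^2)/t^(k+5) := by
        field_simp; ring
      rw [es, et, div_lt_div_iff₀ hs5 ht5]
      nlinarith [keyn]
    have hA : 0 ≤ 1/s^(k+5) - 1/t^(k+5) := by
      have := one_div_le_one_div_of_le hs5 (pow_le_pow_left₀ hs.le hst.le (k+5))
      linarith
    have hB : 0 ≤ 1/s^(k+4) - 1/t^(k+4) := by
      have := one_div_le_one_div_of_le (pow_pos hs (k+4)) (pow_le_pow_left₀ hs.le hst.le (k+4))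
      linarith
    have hb1 : 2*sin s^2 * (1/s^(k+5) - 1/t^(k+5)) ≤ 2*(1/s^(k+5) - 1/t^(k+5)) := by
      nlinarith [sin_sq_le_one s, hA]
    have hb2 : -(cos s * sin s) * (1/s^(k+4) - 1/t^(k+4)) ≤ (1/2)*(1/s^(k+4) - 1/t^(k+4)) :=
      mul_le_mul_of_nonneg_right (aux_neg_cs_le) hB
    have hidg : (2 * sin s ^ 2 / s ^ (k+5) - cos s * sin s / s ^ (k+4) - 1 / s ^ (k+3)) -
        (2 * sin s ^ 2 / t ^ (k+5) - cos s * sin s / t ^ (k+4) - 1 / t ^ (k+3))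
        = 2*sin s^2 * (1/s^(k+5) - 1/t^(k+5)) + (-(cos s * sin s)) * (1/s^(k+4) - 1/t^(k+4))
          - ((2/t^(k+5) + 1/(2*t^(k+4)) - 1/t^(k+3)) - (2/s^(k+5) + 1/(2*s^(k+4)) - 1/s^(k+3)))
          - (2*(1/s^(k+5) - 1/t^(k+5)) + (1/2)*(1/s^(k+4) - 1/t^(k+4))) := by ring
    rw [hidg]
    linarith [hb1, hb2, gs_lt]
  · -- small s case
    push_neg at h3
    have hn7 : 7 ≤ n := by
      cases hcase with
      | inl h => linarith
      | inr h => exact h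
    obtain ⟨m, rfl⟩ : ∃ m, n = m + 7 := ⟨n - 7, by omega⟩
    rw [show m + 7 - 1 = m + 6 from by omega, show m + 7 - 2 = m + 5 from by omega]
    have hsM : (0:ℝ) < s^(m+7) := pow_pos hs _
    have htM : (0:ℝ) < t^(m+7) := pow_pos ht _
    have eL := aux_split (x := s) (a := 2 * sin s ^ 2) (b := cos s * sin s) hs.ne' m
    have eR := aux_split (x := t) (a := 2 * sin s ^ 2) (b := cos s * sin s) ht.ne' m
    rw [eL, eR]
    clear eL eR
    have hN := aux_N_le hs (by linarith : s ≤ 3)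
    have hM : -(t^2 + t/2) ≤ 2 * sin s ^ 2 - t * (cos s * sin s) - t^2 := by
      have := mul_le_mul_of_nonneg_left (aux_cs_le (s := s)) ht.le
      nlinarith [sq_nonneg (sin s)]
    have key := aux_small_key m hs hst htpi h5t
    have c1 : (2 * sin s ^ 2 - s * (cos s * sin s) - s^2) / s^(m+7) ≤ (-s^6/400)/s^(m+7) :=
      div_le_div_of_nonneg_right hN hsM.le
    have c2 : (-(t^2+t/2))/t^(m+7) ≤ (2 * sin s ^ 2 - t * (cos s * sin s) - t^2) / t^(m+7) :=
      div_le_div_of_nonneg_right hM htM.le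
    linarith [c1, key, c2]



lemma aux_split5 {x a b : ℝ} (hx : x ≠ 0) (j : ℕ) :
    a / x^(j+5) - b / x^(j+4) - 1 / x^(j+3) = (a - x*b - x^2)/x^(j+5) := by
  have e1 : (x*b)/x^(j+5) = b/x^(j+4) := by
    rw [div_eq_div_iff (pow_ne_zero _ hx) (pow_ne_zero _ hx)]; ring
  have e2 : x^2/x^(j+5) = 1/x^(j+3) := by
    rw [div_eq_div_iff (pow_ne_zero _ hx) (pow_ne_zero _ hx)]; ring
  rw [sub_div, sub_div, e1, e2]

lemma aux_bound (n : ℕ) (hn : 5 ≤ n) {s : ℝ} (hs : 0 < s) :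
    |((2 * sin s ^ 2 / s ^ n - cos s * sin s / s ^ (n - 1) - 1 / s ^ (n - 2)) -
        (2 * sin (s + π) ^ 2 / (s + π) ^ n - cos (s + π) * sin (s + π) / (s + π) ^ (n - 1) -
          1 / (s + π) ^ (n - 2))) * sin s ^ (n - 2)| ≤ 5 := by
  have hpi3 := Real.pi_gt_three
  simp only [Real.sin_add_pi, Real.cos_add_pi, neg_mul_neg, neg_sq]
  obtain ⟨m, rfl⟩ : ∃ m, n = m + 5 := ⟨n - 5, by omega⟩
  rw [show m + 5 - 1 = m + 4 from by omega, show m + 5 - 2 = m + 3 from by omega]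
  obtain ⟨t, ht_eq⟩ : ∃ t : ℝ, t = s + π := ⟨_, rfl⟩
  have hst : s < t := by rw [ht_eq]; linarith
  have ht3 : 3 ≤ t := by rw [ht_eq]; linarith
  have ht : 0 < t := by linarith
  rw [show s + π = t from ht_eq.symm]
  rw [aux_split5 hs.ne' m, aux_split5 ht.ne' m]
  have habs_sin_le_s : |sin s| ≤ s := abs_sin_le_abs.trans (le_of_eq (abs_of_pos hs))
  have habs_sin_le_1 : |sin s| ≤ 1 := abs_sin_le_one s
  have hcs_s : |cos s * sin s| ≤ s := by
    rw [abs_mul]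
    calc |cos s| * |sin s| ≤ 1 * s :=
      mul_le_mul (abs_cos_le_one s) habs_sin_le_s (abs_nonneg _) zero_le_one
    _ = s := one_mul s
  have hcs_1 : |cos s * sin s| ≤ 1 := by
    rw [abs_mul]
    calc |cos s| * |sin s| ≤ 1 * 1 :=
      mul_le_mul (abs_cos_le_one s) habs_sin_le_1 (abs_nonneg _) zero_le_one
    _ = 1 := one_mul 1
  have h1 : |(2 * sin s ^ 2 - s * (cos s * sin s) - s^2) / s^(m+5) * sin s ^ (m+3)| ≤ 4 := by
    rw [abs_mul, abs_div, abs_pow, abs_pow, abs_of_pos hs, div_mul_eq_mul_div,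
      div_le_iff₀ (pow_pos hs (m+5))]
    have key : |2 * sin s ^ 2 - s * (cos s * sin s) - s^2| * |sin s| ^ (m+3) ≤ 4 * s^(m+5) := by
      rcases le_total s 1 with hc | hc
      · have hN4 : |2 * sin s ^ 2 - s * (cos s * sin s) - s^2| ≤ 4*s^2 := by
          rw [abs_le]; constructor
          · nlinarith [sin_sq_le_sq (x := s), abs_le.1 hcs_s, sq_nonneg (sin s)]
          · nlinarith [sin_sq_le_sq (x := s), abs_le.1 hcs_s, sq_nonneg s]
        have hpow : |sin s|^(m+3) ≤ s^(m+3) := pow_le_pow_left₀ (abs_nonneg _) habs_sin_le_s _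
        calc |2 * sin s ^ 2 - s * (cos s * sin s) - s^2| * |sin s| ^ (m+3)
            ≤ (4*s^2) * s^(m+3) :=
              mul_le_mul hN4 hpow (by positivity) (by positivity)
          _ = 4 * s^(m+5) := by ring
      · have hN4 : |2 * sin s ^ 2 - s * (cos s * sin s) - s^2| ≤ 4*s^2 := by
          rw [abs_le]; constructor
          · nlinarith [sin_sq_le_one s, abs_le.1 hcs_1, sq_nonneg (sin s)]
          · nlinarith [sin_sq_le_one s, abs_le.1 hcs_1, sq_nonneg s]
        have hpow1 : |sin s|^(m+3) ≤ 1 := pow_le_one₀ (abs_nonneg _) habs_sin_le_1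
        have hss : s^2 ≤ s^(m+5) := pow_le_pow_right₀ hc (by omega)
        calc |2 * sin s ^ 2 - s * (cos s * sin s) - s^2| * |sin s| ^ (m+3)
            ≤ (4*s^2) * 1 := mul_le_mul hN4 hpow1 (by positivity) (by positivity)
          _ ≤ 4 * s^(m+5) := by nlinarith
    convert key using 2
  have h2 : |(2 * sin s ^ 2 - t * (cos s * sin s) - t^2) / t^(m+5) * sin s ^ (m+3)| ≤ 1 := by
    rw [abs_mul, abs_div, abs_pow, abs_pow, abs_of_pos ht, div_mul_eq_mul_div,
      div_le_iff₀ (pow_pos ht (m+5))]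
    have hM : |2 * sin s ^ 2 - t * (cos s * sin s) - t^2| ≤ t^3 := by
      have hts : t * (cos s * sin s) ≤ t ∧ -(t * (cos s * sin s)) ≤ t := by
        constructor <;> nlinarith [abs_le.1 hcs_1, ht]
      rw [abs_le]; constructor
      · nlinarith [sin_sq_le_one s, sq_nonneg (sin s), hts.1, hts.2]
      · nlinarith [sin_sq_le_one s, sq_nonneg (sin s), hts.1, hts.2]
    have hpow1 : |sin s|^(m+3) ≤ 1 := pow_le_one₀ (abs_nonneg _) habs_sin_le_1
    have ht35 : t^3 ≤ t^(m+5) := pow_le_pow_right₀ (by linarith) (by omega)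
    calc |2 * sin s ^ 2 - t * (cos s * sin s) - t^2| * |sin s| ^ (m+3)
        ≤ t^3 * 1 := mul_le_mul hM hpow1 (by positivity) (by positivity)
      _ ≤ 1 * t^(m+5) := by nlinarith [pow_pos ht (m+5)]
  calc |((2 * sin s ^ 2 - s * (cos s * sin s) - s^2) / s^(m+5) -
        (2 * sin s ^ 2 - t * (cos s * sin s) - t^2) / t^(m+5)) * sin s ^ (m+3)|
      = |(2 * sin s ^ 2 - s * (cos s * sin s) - s^2) / s^(m+5) * sin s ^ (m+3) -
          (2 * sin s ^ 2 - t * (cos s * sin s) - t^2) / t^(m+5) * sin s ^ (m+3)| := by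
        rw [sub_mul]
    _ ≤ |(2 * sin s ^ 2 - s * (cos s * sin s) - s^2) / s^(m+5) * sin s ^ (m+3)| +
          |(2 * sin s ^ 2 - t * (cos s * sin s) - t^2) / t^(m+5) * sin s ^ (m+3)| := abs_sub _ _
    _ ≤ 5 := by linarith



open Real in
theorem stmt_6 (n : ℕ) (hn : 5 ≤ n) (hodd : Odd n) (i : ℕ) (hi : Even i)
    (h : 6 ≤ n ∨ (n = 5 ∧ 2 ≤ i)) :
    ∫ s in (i * π)..((i + 1) * π),
      ((2 * sin s ^ 2 / s ^ n - cos s * sin s / s ^ (n - 1) - 1 / s ^ (n - 2)) -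
        (2 * sin (s + π) ^ 2 / (s + π) ^ n - cos (s + π) * sin (s + π) / (s + π) ^ (n - 1) -
          1 / (s + π) ^ (n - 2))) * sin s ^ (n - 2) < 0 := by
  have hpi3 := Real.pi_gt_three
  set F : ℝ → ℝ := fun s =>
      ((2 * sin s ^ 2 / s ^ n - cos s * sin s / s ^ (n - 1) - 1 / s ^ (n - 2)) -
        (2 * sin (s + π) ^ 2 / (s + π) ^ n - cos (s + π) * sin (s + π) / (s + π) ^ (n - 1) -
          1 / (s + π) ^ (n - 2))) * sin s ^ (n - 2) with hF
  have hab : (i * π : ℝ) < (i + 1) * π := by nlinarith [Real.pi_pos]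
  have ha0 : (0:ℝ) ≤ i * π := by positivity
  have hFneg : ∀ s ∈ Set.Ioo (i * π : ℝ) ((i + 1) * π), F s < 0 := by
    intro s hs
    have hs0 : 0 < s := lt_of_le_of_lt ha0 hs.1
    have hsin : 0 < sin s := by
      have e : s - (i:ℝ)*π + ((i:ℤ):ℝ) * π = s := by push_cast; ring
      have hh := Real.sin_add_int_mul_pi (s - (i:ℝ)*π) (i:ℤ)
      rw [e] at hh
      rw [hh, Even.neg_one_zpow (by exact_mod_cast hi), one_mul]
      exact Real.sin_pos_of_pos_of_lt_pi (by linarith [hs.1]) (by linarith [hs.2])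
    have hcase : 3 ≤ s ∨ 7 ≤ n := by
      rcases h with h6 | ⟨h5, hi2⟩
      · right; obtain ⟨j, hj⟩ := hodd; omega
      · left
        have hi2' : (2:ℝ) ≤ (i:ℝ) := by exact_mod_cast hi2
        nlinarith [hs.1, Real.pi_pos]
    have hbr := aux_bracket_neg n hn hs0 hcase
    rw [hF]
    simp only [Real.sin_add_pi, Real.cos_add_pi, neg_mul_neg, neg_sq]
    exact mul_neg_of_neg_of_pos hbr (pow_pos hsin _)
  have hmeas : Measurable F := by rw [hF]; fun_prop
  have hInt : IntervalIntegrable F volume (i * π : ℝ) ((i + 1) * π) := by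
    rw [intervalIntegrable_iff_integrableOn_Ioc_of_le hab.le]
    constructor
    · exact hmeas.aestronglyMeasurable.restrict
    · apply MeasureTheory.HasFiniteIntegral.of_bounded (C := 5)
      rw [MeasureTheory.ae_restrict_iff' measurableSet_Ioc]
      filter_upwards with s hs
      have hs0 : 0 < s := lt_of_le_of_lt ha0 hs.1
      rw [Real.norm_eq_abs]
      exact aux_bound n hn hs0
  have hpos : 0 < ∫ s in (i * π : ℝ)..((i + 1) * π), -F s := by
    apply intervalIntegral.intervalIntegral_pos_of_pos_on hInt.neg _ hab
    intro x hx
    exact neg_pos.2 (hFneg x hx)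
  rw [intervalIntegral.integral_neg] at hpos
  linarith
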